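/- arXiv:1005.3934 — 2 statements merged into one kernel-verified Lean document; each statement's English description precedes it below -/
import Mathlib

section
/- For every real q>1, every n≥1, every m∈ℕ and every x∈[0,∞), the moments of the q-Szász operator satisfy the recurrence M_{n,q}(t^{m+1};x) = ∑_{j=0}^{m} C(m,j) · (x q^j/[n]_q^{m−j}) · M_{n,q}(t^j; q^{−1}x), where C(m,j) is the ordinary binomial coefficient. -/
open scoped BigOperators

/-- The `q`-integer `[k]_q = (q^k - 1)/(q - 1)`. -/
noncomputable def qNat (q : ℝ) (k : ℕ) : ℝ := (q ^ k - 1) / (q - 1)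

/-- The `q`-factorial `[k]_q! = [1]_q [2]_q ⋯ [k]_q`, with `[0]_q! = 1`. -/
noncomputable def qFactorial (q : ℝ) : ℕ → ℝ
  | 0 => 1
  | k + 1 => qFactorial q k * qNat q (k + 1)

/-- The `q`-exponential function `e_q(z) = ∑_{k=0}^∞ z^k/[k]_q!`. -/
noncomputable def qExp (q z : ℝ) : ℝ := ∑' k : ℕ, z ^ k / qFactorial q k

/-- The `q`-Szász basis function
`s_{n,k}(q;x) = q^{-k(k-1)/2} ([n]_q^k x^k/[k]_q!) e_q(-[n]_q q^{-k} x)`. -/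
noncomputable def qSzaszBasis (q : ℝ) (n k : ℕ) (x : ℝ) : ℝ :=
  (q ^ (k * (k - 1) / 2))⁻¹ * (qNat q n ^ k * x ^ k / qFactorial q k) *
    qExp q (-(qNat q n) * q ^ (-(k : ℤ)) * x)

/-- The `q`-Szász operator `M_{n,q}(f;x) = ∑_{k=0}^∞ f([k]_q/[n]_q) s_{n,k}(q;x)`. -/
noncomputable def qSzasz (q : ℝ) (n : ℕ) (f : ℝ → ℝ) (x : ℝ) : ℝ :=
  ∑' k : ℕ, f (qNat q k / qNat q n) * qSzaszBasis q n k x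

/-- The weight `w_0(x) = 1`, `w_p(x) = (1 + x^p)⁻¹` for `p ≥ 1`. -/
noncomputable def weight (p : ℕ) (x : ℝ) : ℝ := if p = 0 then 1 else (1 + x ^ p)⁻¹

/-- The weighted sup-norm `‖f‖_p = sup_{x ≥ 0} w_p(x)|f(x)|`. -/
noncomputable def wnorm (p : ℕ) (f : ℝ → ℝ) : ℝ :=
  ⨆ x : Set.Ici (0 : ℝ), weight p x.1 * |f x.1|

/-- Membership in the space `C_p`: `f` is continuous on `[0,∞)` and `w_p f` is
uniformly continuous and bounded on `[0,∞)`. -/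
def MemCp (p : ℕ) (f : ℝ → ℝ) : Prop :=
  ContinuousOn f (Set.Ici 0) ∧
  UniformContinuousOn (fun x => weight p x * f x) (Set.Ici 0) ∧
  ∃ M : ℝ, ∀ x ∈ Set.Ici (0 : ℝ), |weight p x * f x| ≤ M

/-- The second difference `Δ_h² f(x) = f(x+2h) - 2f(x+h) + f(x)`. -/
noncomputable def delta2 (f : ℝ → ℝ) (h x : ℝ) : ℝ := f (x + 2 * h) - 2 * f (x + h) + f x

/-- The second modulus of smoothness `ω_p²(f;δ) = sup_{0<h≤δ} ‖Δ_h² f‖_p`. -/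
noncomputable def omega2 (p : ℕ) (f : ℝ → ℝ) (δ : ℝ) : ℝ :=
  ⨆ h : {h : ℝ // 0 < h ∧ h ≤ δ}, wnorm p (fun x => delta2 f h.1 x)

/-- The (first) modulus of continuity on `[0,∞)`:
`ω(g;δ) = sup {|g(s)-g(t)| : s,t ≥ 0, |s-t| ≤ δ}`. -/
noncomputable def omega1 (g : ℝ → ℝ) (δ : ℝ) : ℝ :=
  sSup {d : ℝ | ∃ s t : ℝ, 0 ≤ s ∧ 0 ≤ t ∧ |s - t| ≤ δ ∧ d = |g s - g t|}

/-- The `q`-derivative `(D_q g)(x) = (g(qx) - g(x))/((q-1)x)`. -/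
noncomputable def qDeriv (q : ℝ) (g : ℝ → ℝ) (x : ℝ) : ℝ := (g (q * x) - g x) / ((q - 1) * x)

/-- The `q`-Stirling-type numbers: `S_q(0,0)=1`, `S_q(m,0)=0` for `m>0`,
`S_q(m,j)=0` for `m<j`, and `S_q(m+1,j)=[j]_q S_q(m,j) + S_q(m,j-1)`. -/
noncomputable def qStirling (q : ℝ) : ℕ → ℕ → ℝ
  | 0, 0 => 1
  | 0, _ + 1 => 0
  | _ + 1, 0 => 0
  | m + 1, j + 1 => qNat q (j + 1) * qStirling q m (j + 1) + qStirling q m j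

open Filter

section aux
variable {q : ℝ} (hq : 1 < q)

lemma tri (k : ℕ) : (k + 1) * k / 2 = k * (k - 1) / 2 + k := by
  cases k with
  | zero => rfl
  | succ j =>
    obtain ⟨c, hc⟩ := Nat.even_mul_succ_self j
    have e2 : (j + 1) * j = c + c := by rw [mul_comm]; exact hc
    have e1 : (j + 1 + 1) * (j + 1) = c + c + 2 * (j + 1) := by
      rw [show (j + 1 + 1) * (j + 1) = j * (j + 1) + 2 * (j + 1) from by ring, hc]
    simp only [Nat.add_sub_cancel]
    rw [e1, e2]
    omega

include hq

lemma qNat_nonneg (k : ℕ) : 0 ≤ qNat q k := by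
  have h1 : (1:ℝ) ≤ q ^ k := one_le_pow₀ hq.le
  exact div_nonneg (by linarith) (by linarith)

lemma qNat_succ (k : ℕ) : qNat q (k + 1) = 1 + q * qNat q k := by
  have h : q - 1 ≠ 0 := by linarith
  simp only [qNat]
  field_simp
  ring

lemma qNat_pos {k : ℕ} (hk : 1 ≤ k) : 0 < qNat q k := by
  have h1 : (1:ℝ) < q ^ k := one_lt_pow₀ hq (by omega)
  exact div_pos (by linarith) (by linarith)

lemma qNat_le (k : ℕ) : qNat q k ≤ q ^ k / (q - 1) := by
  apply div_le_div_of_nonneg_right (by linarith) (by linarith)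

lemma pow_le_qNat_succ (k : ℕ) : q ^ k ≤ qNat q (k + 1) := by
  rw [qNat, le_div_iff₀ (by linarith)]
  have h1 : (1:ℝ) ≤ q ^ k := one_le_pow₀ hq.le
  have : q ^ (k+1) = q ^ k * q := by ring
  nlinarith

lemma qFactorial_pos (k : ℕ) : 0 < qFactorial q k := by
  induction k with
  | zero => norm_num [qFactorial]
  | succ j ih => exact mul_pos ih (qNat_pos hq (by omega))

lemma pow_le_qFactorial (k : ℕ) : q ^ (k * (k - 1) / 2) ≤ qFactorial q k := by
  induction k with
  | zero => simp [qFactorial]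
  | succ j ih =>
    have h1 : (j + 1) * ((j + 1) - 1) / 2 = j * (j - 1) / 2 + j := by
      simpa using tri j
    rw [h1, pow_add, qFactorial]
    have h2 : (0:ℝ) ≤ q ^ (j * (j - 1) / 2) := by positivity
    exact mul_le_mul ih (pow_le_qNat_succ hq j) (by positivity) (le_of_lt (qFactorial_pos hq j))

lemma summable_aux {A r : ℝ} (hA : 0 ≤ A) (hr0 : 0 < r) (hr1 : r < 1) :
    Summable (fun k : ℕ => A ^ k * r ^ (k * (k - 1) / 2)) := by
  apply summable_of_ratio_norm_eventually_le (r := 2⁻¹) (by norm_num)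
  have h0 : Tendsto (fun k : ℕ => A * r ^ k) atTop (nhds 0) := by
    simpa using (tendsto_pow_atTop_nhds_zero_of_lt_one (le_of_lt hr0) hr1).const_mul A
  filter_upwards [h0.eventually_le_const (by norm_num : (0:ℝ) < 2⁻¹)] with k hk
  have hterm : (0:ℝ) ≤ A ^ k * r ^ (k * (k - 1) / 2) := by positivity
  have hterm' : (0:ℝ) ≤ A ^ (k+1) * r ^ ((k+1) * ((k+1) - 1) / 2) := by positivity
  rw [Real.norm_of_nonneg hterm, Real.norm_of_nonneg hterm']
  have h1 : (k + 1) * ((k + 1) - 1) / 2 = k * (k - 1) / 2 + k := by simpa using tri k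
  rw [h1]
  have e : A ^ (k + 1) * r ^ (k * (k - 1) / 2 + k)
      = (A * r ^ k) * (A ^ k * r ^ (k * (k - 1) / 2)) := by ring
  rw [e]
  exact mul_le_mul_of_nonneg_right hk hterm

end aux

section aux2
variable {q : ℝ} (hq : 1 < q)
include hq

lemma summable_qExpSeries {c : ℝ} (hc : 0 ≤ c) :
    Summable (fun i : ℕ => c ^ i / qFactorial q i) := by
  have hq0 : 0 < q := by linarith
  refine Summable.of_nonneg_of_le
    (fun i => div_nonneg (pow_nonneg hc i) (qFactorial_pos hq i).le)
    (fun i => ?_)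
    (summable_aux hq hc (by positivity) (inv_lt_one_of_one_lt₀ hq))
  rw [inv_pow, div_eq_mul_inv]
  exact mul_le_mul_of_nonneg_left
    (inv_anti₀ (by positivity) (pow_le_qFactorial hq i))
    (pow_nonneg hc i)

lemma abs_qExp_le {c z : ℝ} (hc : 0 ≤ c) (hz : |z| ≤ c) :
    |qExp q z| ≤ ∑' i : ℕ, c ^ i / qFactorial q i := by
  have hb : ∀ i : ℕ, ‖z ^ i / qFactorial q i‖ ≤ c ^ i / qFactorial q i := by
    intro i
    rw [Real.norm_eq_abs, abs_div, abs_of_pos (qFactorial_pos hq i), abs_pow]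
    exact div_le_div_of_nonneg_right (pow_le_pow_left₀ (abs_nonneg z) hz i)
      (qFactorial_pos hq i).le
  have hs := summable_qExpSeries hq hc
  have hs2 : Summable (fun i : ℕ => ‖z ^ i / qFactorial q i‖) :=
    hs.of_nonneg_of_le (fun i => norm_nonneg _) hb
  calc |qExp q z| ≤ ∑' i : ℕ, ‖z ^ i / qFactorial q i‖ := by
        rw [← Real.norm_eq_abs]; exact norm_tsum_le_tsum_norm hs2
    _ ≤ ∑' i : ℕ, c ^ i / qFactorial q i := Summable.tsum_le_tsum hb hs2 hs

lemma summable_moment {n : ℕ} (hn : 1 ≤ n) (p : ℕ) {y : ℝ} (hy : 0 ≤ y) :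
    Summable (fun k : ℕ => (qNat q k / qNat q n) ^ p * qSzaszBasis q n k y) := by
  have hq0 : 0 < q := by linarith
  have hN : 0 < qNat q n := qNat_pos hq hn
  set B : ℝ := ∑' i : ℕ, (qNat q n * y) ^ i / qFactorial q i with hB
  have hB0 : 0 ≤ B := tsum_nonneg fun i =>
    div_nonneg (pow_nonneg (mul_nonneg hN.le hy) i) (qFactorial_pos hq i).le
  have hE : ∀ k : ℕ, |qExp q (-(qNat q n) * q ^ (-(k : ℤ)) * y)| ≤ B := by
    intro k
    apply abs_qExp_le hq (mul_nonneg hN.le hy)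
    have h1 : |-(qNat q n) * q ^ (-(k : ℤ)) * y| = qNat q n * q ^ (-(k : ℤ)) * y := by
      rw [abs_mul, abs_mul, abs_neg, abs_of_pos hN, abs_of_nonneg hy,
        abs_of_pos (zpow_pos hq0 _)]
    rw [h1]
    have h2 : q ^ (-(k : ℤ)) ≤ 1 := zpow_le_one_of_nonpos₀ hq.le (by omega)
    nlinarith [mul_nonneg (mul_nonneg hN.le hy) (sub_nonneg.mpr h2)]
  set A : ℝ := q ^ p * (qNat q n * y) with hA
  set K : ℝ := B / ((q - 1) * qNat q n) ^ p with hK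
  have hqN1 : (0:ℝ) < (q - 1) * qNat q n := mul_pos (by linarith) hN
  have hK0 : 0 ≤ K := div_nonneg hB0 (pow_nonneg hqN1.le p)
  have hA0 : 0 ≤ A := mul_nonneg (by positivity) (mul_nonneg hN.le hy)
  have hr1 : q⁻¹ * q⁻¹ < 1 := by
    have h := inv_lt_one_of_one_lt₀ hq
    have h2 : 0 < q⁻¹ := inv_pos.mpr hq0
    nlinarith
  apply Summable.of_norm_bounded
    (g := fun k => K * (A ^ k * (q⁻¹ * q⁻¹) ^ (k * (k - 1) / 2)))
    ((summable_aux hq hA0 (by positivity) hr1).mul_left K)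
  intro k
  have hqF := qFactorial_pos hq k
  have hqFk := pow_le_qFactorial hq k
  have hNk := qNat_nonneg hq k
  have hkle := qNat_le hq k
  set T := k * (k - 1) / 2 with hT
  have ha1 : (0:ℝ) ≤ (qNat q k / qNat q n) ^ p :=
    pow_nonneg (div_nonneg hNk hN.le) p
  have ha2 : (0:ℝ) ≤ (q ^ T)⁻¹ := by positivity
  have ha3 : (0:ℝ) ≤ qNat q n ^ k * y ^ k / qFactorial q k :=
    div_nonneg (mul_nonneg (pow_nonneg hN.le k) (pow_nonneg hy k)) hqF.le
  have hb1 : (0:ℝ) ≤ ((q ^ k / (q - 1)) / qNat q n) ^ p := by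
    apply pow_nonneg
    exact div_nonneg (div_nonneg (by positivity) (by linarith)) hN.le
  have h13 : (qNat q k / qNat q n) ^ p ≤ ((q ^ k / (q - 1)) / qNat q n) ^ p :=
    pow_le_pow_left₀ (div_nonneg hNk hN.le)
      (div_le_div_of_nonneg_right hkle hN.le) p
  have h33 : qNat q n ^ k * y ^ k / qFactorial q k ≤
      qNat q n ^ k * y ^ k * (q ^ T)⁻¹ := by
    rw [div_eq_mul_inv]
    exact mul_le_mul_of_nonneg_left
      (inv_anti₀ (by positivity) hqFk)
      (mul_nonneg (pow_nonneg hN.le k) (pow_nonneg hy k))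
  rw [qSzaszBasis, Real.norm_eq_abs, ← hT]
  rw [show (qNat q k / qNat q n) ^ p *
      ((q ^ T)⁻¹ * (qNat q n ^ k * y ^ k / qFactorial q k) *
        qExp q (-(qNat q n) * q ^ (-(k : ℤ)) * y)) =
      ((qNat q k / qNat q n) ^ p * (q ^ T)⁻¹ *
        (qNat q n ^ k * y ^ k / qFactorial q k)) *
        qExp q (-(qNat q n) * q ^ (-(k : ℤ)) * y) from by ring]
  rw [abs_mul]
  have hP0 : 0 ≤ (qNat q k / qNat q n) ^ p * (q ^ T)⁻¹ *
      (qNat q n ^ k * y ^ k / qFactorial q k) :=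
    mul_nonneg (mul_nonneg ha1 ha2) ha3
  rw [abs_of_nonneg hP0]
  calc (qNat q k / qNat q n) ^ p * (q ^ T)⁻¹ *
      (qNat q n ^ k * y ^ k / qFactorial q k) * |qExp q (-(qNat q n) * q ^ (-(k : ℤ)) * y)|
      ≤ (qNat q k / qNat q n) ^ p * (q ^ T)⁻¹ *
        (qNat q n ^ k * y ^ k / qFactorial q k) * B :=
        mul_le_mul_of_nonneg_left (hE k) hP0
    _ ≤ ((q ^ k / (q - 1)) / qNat q n) ^ p * (q ^ T)⁻¹ *
        (qNat q n ^ k * y ^ k * (q ^ T)⁻¹) * B := by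
        apply mul_le_mul_of_nonneg_right ?_ hB0
        exact mul_le_mul (mul_le_mul_of_nonneg_right h13 ha2) h33 ha3
          (mul_nonneg hb1 ha2)
    _ = K * (A ^ k * (q⁻¹ * q⁻¹) ^ T) := by
        rw [hK, hA]
        have hNe : qNat q n ≠ 0 := hN.ne'
        simp only [div_pow, mul_pow, inv_pow]
        field_simp
        ring

end aux2

section main
variable {q : ℝ} (hq : 1 < q)
include hq

/-- Key identity: `([k+1]/[n]) s_{n,k+1}(x) = x · s_{n,k}(x/q)`. -/
lemma basis_shift {n : ℕ} (hn : 1 ≤ n) (k : ℕ) (x : ℝ) :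
    qNat q (k + 1) / qNat q n * qSzaszBasis q n (k + 1) x =
      x * qSzaszBasis q n k (x / q) := by
  have hq0 : 0 < q := by linarith
  have hN : 0 < qNat q n := qNat_pos hq hn
  have hk1 : 0 < qNat q (k + 1) := qNat_pos hq (by omega)
  have hqF : 0 < qFactorial q k := qFactorial_pos hq k
  -- exp arguments agree
  have harg : -(qNat q n) * q ^ (-((k:ℕ)+1 : ℤ)) * x = -(qNat q n) * q ^ (-(k : ℤ)) * (x / q) := by
    have : q ^ (-((k:ℕ)+1 : ℤ)) = q ^ (-(k : ℤ)) * q⁻¹ := by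
      rw [show -((k:ℕ)+1 : ℤ) = -(k:ℤ) + (-1) from by ring, zpow_add₀ hq0.ne', zpow_neg_one]
    rw [this]; ring
  have hT : (k + 1) * ((k + 1) - 1) / 2 = k * (k - 1) / 2 + k := by simpa using tri k
  rw [qSzaszBasis, qSzaszBasis, hT]
  rw [show (-((k:ℕ)+1 : ℤ)) = (-(((k+1) : ℕ) : ℤ)) from by push_cast; ring] at harg
  rw [harg]
  rw [qFactorial, pow_add, div_pow]
  have hqT : (0:ℝ) < q ^ (k * (k - 1) / 2) := by positivity
  field_simp
  ring

theorem qSzasz_moment_recurrence' (n : ℕ) (hn : 1 ≤ n)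
    (m : ℕ) (x : ℝ) (hx : 0 ≤ x) :
    qSzasz q n (fun t => t ^ (m + 1)) x =
      ∑ j ∈ Finset.range (m + 1),
        (Nat.choose m j : ℝ) * (x * q ^ j / qNat q n ^ (m - j)) *
          qSzasz q n (fun t => t ^ j) (x / q) := by
  have hq0 : 0 < q := by linarith
  have hN : 0 < qNat q n := qNat_pos hq hn
  have hxq : 0 ≤ x / q := div_nonneg hx hq0.le
  have hsum : Summable (fun k : ℕ => (qNat q k / qNat q n) ^ (m + 1) * qSzaszBasis q n k x) :=
    summable_moment hq hn (m + 1) hx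
  -- Step 1: drop the k = 0 term and shift
  rw [show qSzasz q n (fun t => t ^ (m + 1)) x =
      ∑' k : ℕ, (qNat q k / qNat q n) ^ (m + 1) * qSzaszBasis q n k x from rfl]
  rw [Summable.tsum_eq_zero_add hsum]
  have h00 : (qNat q 0 / qNat q n) ^ (m + 1) * qSzaszBasis q n 0 x = 0 := by
    simp [qNat]
  rw [h00, zero_add]
  -- Step 2: termwise identity
  have hterm : ∀ k : ℕ,
      (qNat q (k + 1) / qNat q n) ^ (m + 1) * qSzaszBasis q n (k + 1) x =
      ∑ j ∈ Finset.range (m + 1),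
        (Nat.choose m j : ℝ) * (x * q ^ j / qNat q n ^ (m - j)) *
          ((qNat q k / qNat q n) ^ j * qSzaszBasis q n k (x / q)) := by
    intro k
    have e1 : (qNat q (k + 1) / qNat q n) ^ (m + 1) * qSzaszBasis q n (k + 1) x =
        (qNat q (k + 1) / qNat q n) ^ m *
          (qNat q (k + 1) / qNat q n * qSzaszBasis q n (k + 1) x) := by ring
    rw [e1, basis_shift hq hn k x]
    have e2 : qNat q (k + 1) / qNat q n = q * qNat q k / qNat q n + 1 / qNat q n := by
      rw [qNat_succ hq]; field_simp; ring
    rw [e2, add_pow, Finset.sum_mul]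
    apply Finset.sum_congr rfl
    intro j hj
    have hjm : j ≤ m := by simpa using Nat.lt_succ_iff.mp (Finset.mem_range.mp hj)
    have e3 : qNat q n ^ m = qNat q n ^ j * qNat q n ^ (m - j) := by
      rw [← pow_add]; congr 1; omega
    simp only [div_pow, inv_pow]
    field_simp
    ring
  rw [tsum_congr hterm]
  -- Step 3: swap tsum and finite sum
  rw [Summable.tsum_finsetSum (fun j _ => Summable.mul_left _ (summable_moment hq hn j hxq))]
  apply Finset.sum_congr rfl
  intro j hj
  rw [tsum_mul_left]
  rfl

end main

/-- recurrence formula for the moments of the `q`-Szász operator. -/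
theorem qSzasz_moment_recurrence (q : ℝ) (hq : 1 < q) (n : ℕ) (hn : 1 ≤ n)
    (m : ℕ) (x : ℝ) (hx : 0 ≤ x) :
    qSzasz q n (fun t => t ^ (m + 1)) x =
      ∑ j ∈ Finset.range (m + 1),
        (Nat.choose m j : ℝ) * (x * q ^ j / qNat q n ^ (m - j)) *
          qSzasz q n (fun t => t ^ j) (x / q) :=
  qSzasz_moment_recurrence' hq n hn m x hx
end

section
/- For every real q>1, every n≥1 and every x∈[0,∞): M_{n,q}(t^3;x)=x^3 + (2+q)x^2/[n]_q + x/[n]_q^2, and M_{n,q}(t^4;x)=x^4 + (3+2q+q^2)x^3/[n]_q + (3+3q+q^2)x^2/[n]_q^2 + x/[n]_q^3. -/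
open scoped BigOperators

namespace QAux

variable {q : ℝ}

lemma qpos (hq : 1 < q) : 0 < q := lt_trans one_pos hq
lemma qne (hq : 1 < q) : q ≠ 0 := ne_of_gt (qpos hq)
lemma qsub_pos (hq : 1 < q) : 0 < q - 1 := sub_pos.mpr hq

lemma one_le_qpow (hq : 1 < q) (k : ℕ) : 1 ≤ q ^ k := one_le_pow₀ hq.le

lemma qNat_nonneg (hq : 1 < q) (k : ℕ) : 0 ≤ qNat q k :=
  div_nonneg (by linarith [one_le_qpow hq k]) (qsub_pos hq).le

lemma qNat_succ (hq : 1 < q) (k : ℕ) : qNat q (k + 1) = 1 + q * qNat q k := by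
  have h : q - 1 ≠ 0 := ne_of_gt (qsub_pos hq)
  unfold qNat
  field_simp
  ring

lemma qNat_one_le (hq : 1 < q) {k : ℕ} (hk : 1 ≤ k) : 1 ≤ qNat q k := by
  obtain ⟨m, rfl⟩ := Nat.exists_eq_add_of_le hk
  rw [add_comm, qNat_succ hq]
  have := mul_nonneg (qpos hq).le (qNat_nonneg hq m)
  linarith

lemma qNat_pos (hq : 1 < q) {k : ℕ} (hk : 1 ≤ k) : 0 < qNat q k :=
  lt_of_lt_of_le one_pos (qNat_one_le hq hk)

lemma qNat_ne (hq : 1 < q) {k : ℕ} (hk : 1 ≤ k) : qNat q k ≠ 0 := ne_of_gt (qNat_pos hq hk)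

lemma qNat_add (hq : 1 < q) (k j : ℕ) : qNat q (k + j) = qNat q k + q ^ k * qNat q j := by
  have h : q - 1 ≠ 0 := ne_of_gt (qsub_pos hq)
  unfold qNat
  rw [pow_add]
  field_simp
  ring

lemma qNat_le (hq : 1 < q) (k : ℕ) : qNat q k ≤ q ^ k / (q - 1) := by
  have h := qsub_pos hq
  unfold qNat
  gcongr
  linarith

lemma qNat_ge (hq : 1 < q) (k : ℕ) : q ^ k ≤ qNat q (k + 1) := by
  rw [qNat, le_div_iff₀ (qsub_pos hq), pow_succ]
  have := one_le_qpow hq k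
  nlinarith

lemma qFactorial_one_le (hq : 1 < q) (k : ℕ) : 1 ≤ qFactorial q k := by
  induction k with
  | zero => simp [qFactorial]
  | succ n ih =>
    rw [qFactorial]
    have h2 := qNat_one_le hq n.succ_pos
    nlinarith

lemma qFactorial_pos (hq : 1 < q) (k : ℕ) : 0 < qFactorial q k :=
  lt_of_lt_of_le one_pos (qFactorial_one_le hq k)

lemma qFactorial_ne (hq : 1 < q) (k : ℕ) : qFactorial q k ≠ 0 := ne_of_gt (qFactorial_pos hq k)

lemma qFactorial_succ (q : ℝ) (k : ℕ) : qFactorial q (k+1) = qFactorial q k * qNat q (k+1) := rfl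

lemma Esucc (k : ℕ) : (k+1) * ((k+1) - 1) / 2 = k * (k-1) / 2 + k := by
  rw [← Nat.choose_two_right, ← Nat.choose_two_right]
  rw [show k + 1 = k + 1 from rfl, Nat.choose_succ_succ k 1, Nat.choose_one_right, Nat.add_comm]

lemma qFactorial_ge (hq : 1 < q) (k : ℕ) : q ^ (k * (k-1) / 2) ≤ qFactorial q k := by
  induction k with
  | zero => simp [qFactorial]
  | succ n ih =>
    rw [qFactorial_succ, Esucc, pow_add]
    exact mul_le_mul ih (qNat_ge hq n) (pow_nonneg (qpos hq).le n) (le_trans zero_le_one (qFactorial_one_le hq n))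

lemma E_add (k j : ℕ) : (k + j) * ((k + j) - 1) / 2 = k * (k-1)/2 + j * (j-1)/2 + k * j := by
  induction j with
  | zero => simp
  | succ m ih =>
    have h1 : k + (m+1) = (k + m) + 1 := by omega
    rw [h1, Esucc, ih, Esucc, Nat.mul_succ]
    omega

lemma summable_base (hq : 1 < q) (c : ℝ) (hc : 0 ≤ c) :
    Summable (fun k : ℕ => c ^ k * ((q : ℝ) ^ (k * (k-1)/2))⁻¹) := by
  apply summable_of_ratio_norm_eventually_le (r := 1/2) (by norm_num)
  have hten : Filter.Tendsto (fun k : ℕ => c * (q ^ k)⁻¹) Filter.atTop (nhds 0) := by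
    have := tendsto_pow_atTop_atTop_of_one_lt hq
    simpa using Filter.Tendsto.const_mul c this.inv_tendsto_atTop
  have hev : ∀ᶠ k : ℕ in Filter.atTop, c * (q ^ k)⁻¹ ≤ 1/2 := by
    exact hten.eventually_le_const (show (0:ℝ) < 1/2 by norm_num)
  filter_upwards [hev] with k hk
  have hqp := qpos hq
  have h1 : (0:ℝ) < q ^ (k * (k-1)/2) := pow_pos hqp _
  have h2 : (0:ℝ) < q ^ ((k+1) * ((k+1)-1)/2) := pow_pos hqp _
  rw [Real.norm_eq_abs, Real.norm_eq_abs, abs_of_nonneg (by positivity), abs_of_nonneg (by positivity)]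
  have key : c^(k+1) * ((q : ℝ) ^ ((k+1)*((k+1)-1)/2))⁻¹
      = (c * (q^k)⁻¹) * (c^k * (q^(k*(k-1)/2))⁻¹) := by
    rw [Esucc, pow_add q, mul_inv]; ring
  rw [key]
  exact mul_le_mul_of_nonneg_right hk (by positivity)
lemma summable_qExpTerm (hq : 1 < q) (z : ℝ) :
    Summable (fun k : ℕ => z ^ k / qFactorial q k) := by
  apply Summable.of_norm_bounded (summable_base hq |z| (abs_nonneg z))
  intro k
  rw [Real.norm_eq_abs, abs_div, abs_pow, abs_of_pos (qFactorial_pos hq k), div_eq_mul_inv]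
  exact mul_le_mul_of_nonneg_left (inv_anti₀ (pow_pos (qpos hq) _) (qFactorial_ge hq k))
    (pow_nonneg (abs_nonneg z) k)

lemma qExp_nonneg (hq : 1 < q) {b : ℝ} (hb : 0 ≤ b) : 0 ≤ qExp q b :=
  tsum_nonneg fun k => div_nonneg (pow_nonneg hb k) (qFactorial_pos hq k).le

lemma qExp_bound (hq : 1 < q) {z b : ℝ} (hb : 0 ≤ b) (hz : |z| ≤ b) :
    |qExp q z| ≤ qExp q b := by
  have hsz := summable_qExpTerm hq z
  have hsa : Summable (fun k : ℕ => ‖z ^ k / qFactorial q k‖) := hsz.norm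
  have h1 : ‖qExp q z‖ ≤ ∑' k : ℕ, ‖z ^ k / qFactorial q k‖ := norm_tsum_le_tsum_norm hsa
  rw [Real.norm_eq_abs] at h1
  refine h1.trans (Summable.tsum_le_tsum (fun k => ?_) hsa (summable_qExpTerm hq b))
  rw [Real.norm_eq_abs, abs_div, abs_pow, abs_of_pos (qFactorial_pos hq k)]
  gcongr <;> first | exact (qFactorial_pos hq k).le | exact hz | exact abs_nonneg z

end QAux

/-- the basis function in terms of `b = [n]_q x`. -/
noncomputable def G (q : ℝ) (k : ℕ) (b : ℝ) : ℝ :=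
  ((q : ℝ) ^ (k * (k - 1) / 2))⁻¹ * (b ^ k / qFactorial q k) * qExp q (-b * q ^ (-(k : ℤ)))

namespace QAux

lemma zpow_neg_natCast (hq : 1 < q) (k : ℕ) : (q : ℝ) ^ (-(k:ℤ)) = ((q:ℝ) ^ k)⁻¹ := by
  rw [zpow_neg, zpow_natCast]

lemma zpow_neg_le_one (hq : 1 < q) (k : ℕ) : (q : ℝ) ^ (-(k:ℤ)) ≤ 1 := by
  rw [zpow_neg_natCast hq]
  exact inv_le_one_of_one_le₀ (one_le_qpow hq k)

lemma zpow_neg_pos (hq : 1 < q) (k : ℕ) : 0 < (q : ℝ) ^ (-(k:ℤ)) := by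
  rw [zpow_neg_natCast hq]
  positivity

lemma G_abs_bound (hq : 1 < q) {b : ℝ} (hb : 0 ≤ b) (k : ℕ) :
    |G q k b| ≤ qExp q b * (b ^ k * ((q : ℝ) ^ (k * (k-1)/2))⁻¹) := by
  have h1 : |qExp q (-b * q ^ (-(k:ℤ)))| ≤ qExp q b := by
    apply qExp_bound hq hb
    rw [abs_mul, abs_neg, abs_of_nonneg hb, abs_of_pos (zpow_neg_pos hq k)]
    calc b * q ^ (-(k:ℤ)) ≤ b * 1 := by
          exact mul_le_mul_of_nonneg_left (zpow_neg_le_one hq k) hb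
      _ = b := mul_one b
  have h2 : |((q : ℝ) ^ (k * (k - 1) / 2))⁻¹ * (b ^ k / qFactorial q k)|
      ≤ b ^ k * ((q : ℝ) ^ (k * (k-1)/2))⁻¹ := by
    rw [abs_mul, abs_inv, abs_pow, abs_of_pos (qpos hq), abs_div, abs_pow, abs_of_nonneg hb,
      abs_of_pos (qFactorial_pos hq k)]
    rw [mul_comm]
    apply mul_le_mul_of_nonneg_right _ (by positivity)
    exact div_le_self (pow_nonneg hb k) (qFactorial_one_le hq k)
  calc |G q k b| = |((q : ℝ) ^ (k * (k - 1) / 2))⁻¹ * (b ^ k / qFactorial q k)|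
        * |qExp q (-b * q ^ (-(k:ℤ)))| := by rw [G, abs_mul]
    _ ≤ (b ^ k * ((q : ℝ) ^ (k * (k-1)/2))⁻¹) * qExp q b := by
        exact mul_le_mul h2 h1 (abs_nonneg _) (by positivity)
    _ = qExp q b * (b ^ k * ((q : ℝ) ^ (k * (k-1)/2))⁻¹) := mul_comm _ _

lemma summable_poly_G (hq : 1 < q) {b C c : ℝ} (hb : 0 ≤ b) (hc : 0 ≤ c)
    {φ : ℕ → ℝ} (hφ : ∀ k, |φ k| ≤ C * c ^ k) :
    Summable (fun k : ℕ => φ k * G q k b) := by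
  apply Summable.of_norm_bounded (((summable_base hq (c*b) (by positivity)).mul_left (C * qExp q b)))
  intro k
  rw [Real.norm_eq_abs, abs_mul]
  calc |φ k| * |G q k b| ≤ (C * c ^ k) * (qExp q b * (b ^ k * ((q : ℝ) ^ (k * (k-1)/2))⁻¹)) := by
        exact mul_le_mul (hφ k) (G_abs_bound hq hb k) (abs_nonneg _)
          (le_trans (abs_nonneg (φ k)) (hφ k))
    _ = C * qExp q b * ((c*b) ^ k * ((q : ℝ) ^ (k * (k-1)/2))⁻¹) := by
        rw [mul_pow]; ring
end QAux

/-- auxiliary alternating coefficient -/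
noncomputable def Pc (q : ℝ) (k j : ℕ) : ℝ :=
  (-1) ^ k * ((q : ℝ) ^ (k * (k-1)/2 + k * j))⁻¹ / (qFactorial q k * qFactorial q j)

/-- alternating antidiagonal sum -/
noncomputable def Dc (q : ℝ) (N : ℕ) : ℝ := ∑ p ∈ Finset.HasAntidiagonal.antidiagonal N, Pc q p.1 p.2

namespace QAux

lemma Dc_zero (hq : 1 < q) : Dc q 0 = 1 := by
  simp [Dc, Pc, qFactorial]

lemma Pc_left (hq : 1 < q) (k j : ℕ) :
    qNat q (k+1) * Pc q (k+1) j = -((q:ℝ) ^ (k+j))⁻¹ * Pc q k j := by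
  have h1 : (k+1) * ((k+1)-1)/2 + (k+1) * j = (k * (k-1)/2 + k * j) + (k + j) := by
    rw [Esucc]; ring
  have hf := qFactorial_ne hq k
  have hg := qFactorial_ne hq j
  have hn := qNat_ne hq (Nat.le_add_left 1 k)
  have hqp := qpos hq
  rw [Pc, Pc, h1, pow_add, qFactorial_succ, pow_succ]
  field_simp
  ring

lemma Pc_right (hq : 1 < q) (k j : ℕ) :
    (q:ℝ) ^ k * qNat q (j+1) * Pc q k (j+1) = Pc q k j := by
  have h1 : k * (k-1)/2 + k * (j+1) = (k * (k-1)/2 + k * j) + k := by ring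
  have hf := qFactorial_ne hq k
  have hg := qFactorial_ne hq j
  have hn := qNat_ne hq (Nat.le_add_left 1 j)
  have hqp := qpos hq
  rw [Pc, Pc, h1, pow_add, qFactorial_succ]
  field_simp

lemma Dc_rec (hq : 1 < q) (N : ℕ) :
    qNat q (N+1) * Dc q (N+1) = (1 - ((q:ℝ) ^ N)⁻¹) * Dc q N := by
  have hsplit : qNat q (N+1) * Dc q (N+1)
      = (∑ p ∈ Finset.HasAntidiagonal.antidiagonal (N+1), qNat q p.1 * Pc q p.1 p.2)
        + (∑ p ∈ Finset.HasAntidiagonal.antidiagonal (N+1), (q:ℝ) ^ p.1 * qNat q p.2 * Pc q p.1 p.2) := by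
    rw [Dc, Finset.mul_sum, ← Finset.sum_add_distrib]
    apply Finset.sum_congr rfl
    intro p hp
    have hmem := Finset.HasAntidiagonal.mem_antidiagonal.mp hp
    rw [← hmem, qNat_add hq p.1 p.2]
    ring
  have h1 : (∑ p ∈ Finset.HasAntidiagonal.antidiagonal (N+1), qNat q p.1 * Pc q p.1 p.2)
      = -((q:ℝ) ^ N)⁻¹ * Dc q N := by
    rw [Finset.Nat.sum_antidiagonal_succ
      (f := fun p : ℕ × ℕ => qNat q p.1 * Pc q p.1 p.2)]
    have h0 : qNat q 0 = 0 := by simp [qNat]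
    rw [h0, zero_mul, zero_add, Dc, Finset.mul_sum]
    apply Finset.sum_congr rfl
    intro p hp
    have hmem := Finset.HasAntidiagonal.mem_antidiagonal.mp hp
    rw [Pc_left hq p.1 p.2, hmem]
  have h2 : (∑ p ∈ Finset.HasAntidiagonal.antidiagonal (N+1), (q:ℝ) ^ p.1 * qNat q p.2 * Pc q p.1 p.2)
      = Dc q N := by
    rw [Finset.Nat.sum_antidiagonal_succ'
      (f := fun p : ℕ × ℕ => (q:ℝ) ^ p.1 * qNat q p.2 * Pc q p.1 p.2)]
    have h0 : qNat q 0 = 0 := by simp [qNat]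
    rw [h0]
    simp only [mul_zero, zero_mul, zero_add]
    rw [Dc]
    apply Finset.sum_congr rfl
    intro p hp
    exact Pc_right hq p.1 p.2
  rw [hsplit, h1, h2]
  ring

lemma Dc_succ_eq_zero (hq : 1 < q) (N : ℕ) : Dc q (N+1) = 0 := by
  induction N with
  | zero =>
    have h := Dc_rec hq 0
    simp only [pow_zero, inv_one, sub_self, zero_mul] at h
    have hn := qNat_ne hq (le_refl 1)
    exact (mul_eq_zero.mp h).resolve_left hn
  | succ m ih =>
    have h := Dc_rec hq (m+1)
    rw [ih, mul_zero] at h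
    have hn := qNat_ne hq (Nat.le_add_left 1 (m+1))
    exact (mul_eq_zero.mp h).resolve_left hn
lemma a_eq (hq : 1 < q) (b : ℝ) (k j : ℕ) :
    (((q:ℝ) ^ (k * (k-1)/2))⁻¹ * (b ^ k / qFactorial q k)) * ((-b * (q:ℝ) ^ (-(k:ℤ))) ^ j / qFactorial q j)
      = (-b) ^ (k+j) * Pc q k j := by
  have hf := qFactorial_ne hq k
  have hg := qFactorial_ne hq j
  have hqp := qne hq
  have hx : (-b * (q:ℝ) ^ (-(k:ℤ))) ^ j = (-1:ℝ)^j * b^j * ((q:ℝ)^(k*j))⁻¹ := by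
    rw [zpow_neg_natCast hq, mul_pow, ← inv_pow, ← pow_mul, neg_pow b j]; ring
  have h2 : ((-1:ℝ)^k)*((-1:ℝ)^k) = 1 := by
    rw [← pow_add]; exact Even.neg_one_pow ⟨k, rfl⟩
  have h3 : (-b)^k * (-b)^j * ((-1:ℝ)^k) = b^k * ((-1:ℝ)^j * b^j) := by
    rw [neg_pow b k, neg_pow b j]
    linear_combination (b^k * ((-1:ℝ)^j * b^j)) * h2
  rw [hx, Pc, pow_add]
  rw [show (-b)^k*(-b)^j * ((-1:ℝ)^k * ((q:ℝ)^(k*(k-1)/2+k*j))⁻¹ / (qFactorial q k * qFactorial q j))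
      = (b^k * ((-1:ℝ)^j*b^j)) * (((q:ℝ)^(k*(k-1)/2+k*j))⁻¹ / (qFactorial q k * qFactorial q j))
    from by rw [← h3]; ring]
  rw [pow_add q]
  field_simp

lemma summable_row (hq : 1 < q) {b : ℝ} (hb : 0 ≤ b) :
    Summable (fun n : ℕ => ((n:ℝ)+1) * (b ^ n * ((q:ℝ) ^ (n * (n-1)/2))⁻¹)) := by
  apply Summable.of_norm_bounded (summable_base hq (2*b) (by linarith))
  intro n
  have hqp := qpos hq
  rw [Real.norm_eq_abs, abs_of_nonneg (by positivity)]
  have h1 : ((n:ℝ)+1) * b^n ≤ (2*b)^n := by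
    rw [mul_pow]
    apply mul_le_mul_of_nonneg_right _ (pow_nonneg hb n)
    exact_mod_cast Nat.succ_le_of_lt (Nat.lt_two_pow_self (n := n))
  calc ((n:ℝ)+1) * (b^n * ((q:ℝ) ^ (n * (n-1)/2))⁻¹)
      = (((n:ℝ)+1) * b^n) * ((q:ℝ) ^ (n * (n-1)/2))⁻¹ := by ring
    _ ≤ (2*b)^n * ((q:ℝ) ^ (n * (n-1)/2))⁻¹ :=
        mul_le_mul_of_nonneg_right h1 (by positivity)

lemma summable_diagbound (hq : 1 < q) {b : ℝ} (hb : 0 ≤ b) :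
    Summable (fun p : ℕ × ℕ =>
      b ^ (p.1 + p.2) * ((q:ℝ) ^ ((p.1+p.2) * ((p.1+p.2)-1)/2))⁻¹) := by
  have hqp := qpos hq
  rw [← Finset.HasAntidiagonal.sigmaAntidiagonalEquivProd.summable_iff]
  refine (summable_sigma_of_nonneg (fun x => mul_nonneg (pow_nonneg hb _)
    (inv_nonneg.mpr (pow_nonneg hqp.le _)))).mpr ⟨fun n => (hasSum_fintype _).summable, ?_⟩
  refine Summable.congr (summable_row hq hb) (fun n => ?_)
  simp only [Function.comp, Finset.HasAntidiagonal.sigmaAntidiagonalEquivProd_apply]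
  rw [tsum_fintype]
  have hcv : ∀ (y : Finset.HasAntidiagonal.antidiagonal n),
      b ^ (((y : ℕ × ℕ)).1 + ((y : ℕ × ℕ)).2) * ((q:ℝ) ^ ((((y : ℕ × ℕ)).1+((y : ℕ × ℕ)).2) * ((((y : ℕ × ℕ)).1+((y : ℕ × ℕ)).2)-1)/2))⁻¹
        = b ^ n * ((q:ℝ) ^ (n * (n-1)/2))⁻¹ := by
    rintro ⟨p, hp⟩
    have := Finset.HasAntidiagonal.mem_antidiagonal.mp hp
    simp only [this]
  rw [Finset.sum_congr rfl (fun y _ => hcv y)]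
  rw [Finset.sum_const, Finset.card_univ, Fintype.card_coe, Finset.Nat.card_antidiagonal,
    nsmul_eq_mul]
  push_cast
  ring
lemma summable_a (hq : 1 < q) {b : ℝ} (hb : 0 ≤ b) :
    Summable (fun p : ℕ × ℕ =>
      (((q:ℝ) ^ (p.1 * (p.1-1)/2))⁻¹ * (b ^ p.1 / qFactorial q p.1)) *
        ((-b * (q:ℝ) ^ (-(p.1:ℤ))) ^ p.2 / qFactorial q p.2)) := by
  apply Summable.of_norm_bounded (summable_diagbound hq hb)
  rintro ⟨k, j⟩
  have hqp := qpos hq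
  have hfk := qFactorial_pos hq k
  have hfj := qFactorial_pos hq j
  have h1 : |(-b * (q:ℝ) ^ (-(k:ℤ)))| = b * (((q:ℝ)^k)⁻¹) := by
    rw [abs_mul, abs_neg, abs_of_nonneg hb, zpow_neg_natCast hq, abs_of_pos (by positivity)]
  simp only [Real.norm_eq_abs]
  rw [abs_mul, abs_mul, abs_div, abs_div, abs_pow, abs_pow, h1, abs_inv, abs_pow,
    abs_of_pos hqp, abs_of_nonneg hb, abs_of_pos hfk, abs_of_pos hfj]
  rw [mul_pow b]
  simp only [inv_pow]
  rw [← pow_mul q k j]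
  rw [show (k+j) * ((k+j)-1)/2 = k*(k-1)/2 + j*(j-1)/2 + k*j from E_add k j]
  rw [pow_add b, pow_add q (k*(k-1)/2 + j*(j-1)/2), pow_add q (k*(k-1)/2), mul_inv, mul_inv]
  have key : (qFactorial q k)⁻¹ * (qFactorial q j)⁻¹ ≤ 1 * ((q:ℝ)^(j*(j-1)/2))⁻¹ := by
    apply mul_le_mul
    · exact inv_le_one_of_one_le₀ (qFactorial_one_le hq k)
    · exact inv_anti₀ (pow_pos hqp _) (qFactorial_ge hq j)
    · positivity
    · exact zero_le_one
  calc ((q:ℝ) ^ (k * (k-1)/2))⁻¹ * (b ^ k / qFactorial q k) * ((b^j * ((q:ℝ)^(k*j))⁻¹) / qFactorial q j)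
      = (b^k * b^j * (((q:ℝ) ^ (k*(k-1)/2))⁻¹ * ((q:ℝ)^(k*j))⁻¹))
        * ((qFactorial q k)⁻¹ * (qFactorial q j)⁻¹) := by ring
    _ ≤ (b^k * b^j * (((q:ℝ) ^ (k*(k-1)/2))⁻¹ * ((q:ℝ)^(k*j))⁻¹))
        * (1 * ((q:ℝ)^(j*(j-1)/2))⁻¹) := by
        apply mul_le_mul_of_nonneg_left key (by positivity)
    _ = b ^ k * b ^ j * (((q:ℝ) ^ (k * (k-1)/2))⁻¹ * ((q:ℝ) ^ (j * (j-1)/2))⁻¹ * ((q:ℝ) ^ (k*j))⁻¹) := by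
        ring

set_option maxHeartbeats 2000000 in
lemma tsum_G (hq : 1 < q) {b : ℝ} (hb : 0 ≤ b) : ∑' k : ℕ, G q k b = 1 := by
  let A : ℕ × ℕ → ℝ := fun p =>
      (((q:ℝ) ^ (p.1 * (p.1-1)/2))⁻¹ * (b ^ p.1 / qFactorial q p.1)) *
        ((-b * (q:ℝ) ^ (-(p.1:ℤ))) ^ p.2 / qFactorial q p.2)
  have hA : ∀ p : ℕ × ℕ, A p = (((q:ℝ) ^ (p.1 * (p.1-1)/2))⁻¹ * (b ^ p.1 / qFactorial q p.1)) *
        ((-b * (q:ℝ) ^ (-(p.1:ℤ))) ^ p.2 / qFactorial q p.2) := fun p => rfl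
  have hsA : Summable A := summable_a hq hb
  have hrow : ∀ k, Summable (fun j => A (k, j)) := fun k =>
    (((summable_qExpTerm hq (-b * (q:ℝ) ^ (-(k:ℤ)))).mul_left
      (((q:ℝ) ^ (k * (k-1)/2))⁻¹ * (b ^ k / qFactorial q k))).congr
      (fun j => (hA (k, j)).symm))
  have hGk : ∀ k, G q k b = ∑' j, A (k, j) := by
    intro k
    have ht := tsum_mul_left (L := SummationFilter.unconditional ℕ) (a := ((q:ℝ) ^ (k * (k-1)/2))⁻¹ * (b ^ k / qFactorial q k))
      (f := fun j : ℕ => (-b * (q:ℝ) ^ (-(k:ℤ)))^j / qFactorial q j)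
    rw [G, qExp]
    exact ht.symm
  have h1 : ∑' k, G q k b = ∑' p, A p := by
    rw [tsum_congr hGk]
    exact (Summable.tsum_prod' hsA hrow).symm
  have hsig : Summable (fun c : (Σ n : ℕ, Finset.HasAntidiagonal.antidiagonal n) =>
      A (Finset.HasAntidiagonal.sigmaAntidiagonalEquivProd c)) :=
    Finset.HasAntidiagonal.sigmaAntidiagonalEquivProd.summable_iff.mpr hsA
  rw [h1, ← Finset.HasAntidiagonal.sigmaAntidiagonalEquivProd.tsum_eq A,
    Summable.tsum_sigma' (fun n => (hasSum_fintype _).summable) hsig]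
  have hin : ∀ n : ℕ, (∑' y : Finset.HasAntidiagonal.antidiagonal n,
      A (Finset.HasAntidiagonal.sigmaAntidiagonalEquivProd ⟨n, y⟩)) = if n = 0 then 1 else 0 := by
    intro n
    rw [tsum_fintype]
    simp only [Finset.HasAntidiagonal.sigmaAntidiagonalEquivProd_apply]
    rw [Finset.sum_coe_sort (Finset.HasAntidiagonal.antidiagonal n) A]
    have hterm : ∀ p ∈ Finset.HasAntidiagonal.antidiagonal n, A p = (-b)^n * Pc q p.1 p.2 := by
      intro p hp
      have hm := Finset.HasAntidiagonal.mem_antidiagonal.mp hp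
      rw [hA p, ← hm]
      exact a_eq hq b p.1 p.2
    rw [Finset.sum_congr rfl hterm, ← Finset.mul_sum]
    have hDc : (∑ p ∈ Finset.HasAntidiagonal.antidiagonal n, Pc q p.1 p.2) = Dc q n := rfl
    rw [hDc]
    rcases n with _ | m
    · simp [Dc_zero hq]
    · simp [Dc_succ_eq_zero hq m]
  rw [tsum_congr hin]
  exact tsum_ite_eq 0 1
lemma summable_G (hq : 1 < q) {b : ℝ} (hb : 0 ≤ b) : Summable (fun k => G q k b) := by
  have h := summable_poly_G (C := 1) (c := 1) hq hb zero_le_one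
    (φ := fun _ => (1:ℝ)) (fun k => by simp)
  exact h.congr (fun k => one_mul _)

lemma qNat_pow_le (hq : 1 < q) (m k : ℕ) :
    (qNat q k) ^ m ≤ ((q-1)⁻¹)^m * ((q:ℝ)^m)^k := by
  have h1 : (qNat q k)^m ≤ ((q:ℝ)^k / (q-1))^m :=
    pow_le_pow_left₀ (qNat_nonneg hq k) (qNat_le hq k) m
  refine h1.trans_eq ?_
  rw [div_pow, ← pow_mul, mul_comm k m, pow_mul, div_eq_mul_inv, ← inv_pow]
  ring

lemma summable_qNat_pow_G (hq : 1 < q) (m : ℕ) {b : ℝ} (hb : 0 ≤ b) :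
    Summable (fun k => (qNat q k) ^ m * G q k b) := by
  apply summable_poly_G (C := ((q-1)⁻¹)^m) (c := (q:ℝ)^m) hq hb
    (by positivity)
  intro k
  rw [abs_of_nonneg (pow_nonneg (qNat_nonneg hq k) m)]
  exact qNat_pow_le hq m k

lemma summable_succ_pow_G (hq : 1 < q) (m : ℕ) {b : ℝ} (hb : 0 ≤ b) :
    Summable (fun k => (1 + q * qNat q k) ^ m * G q k b) := by
  apply summable_poly_G (C := ((q:ℝ)^m) * ((q-1)⁻¹)^m) (c := (q:ℝ)^m) hq hb
    (by have := qpos hq; positivity)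
  intro k
  rw [← qNat_succ hq k, abs_of_nonneg (pow_nonneg (qNat_nonneg hq (k+1)) m)]
  calc (qNat q (k+1))^m ≤ ((q-1)⁻¹)^m * ((q:ℝ)^m)^(k+1) := qNat_pow_le hq m (k+1)
    _ = (q:ℝ)^m * ((q-1)⁻¹)^m * ((q:ℝ)^m)^k := by rw [pow_succ]; ring

lemma G_succ (hq : 1 < q) (k : ℕ) (b : ℝ) :
    qNat q (k+1) * G q (k+1) b = b * G q k (b / q) := by
  have hqn := qne hq
  have hfk := qFactorial_ne hq k
  have hnk := qNat_ne hq (Nat.le_add_left 1 k)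
  have hqk : ((q:ℝ)^k) ≠ 0 := pow_ne_zero k hqn
  have harg : -b * (q:ℝ) ^ (-((k:ℕ)+1:ℕ):ℤ) = -(b/q) * (q:ℝ) ^ (-(k:ℤ)) := by
    rw [zpow_neg, zpow_neg, zpow_natCast, zpow_natCast, pow_succ]
    field_simp
  rw [G, G, harg, Esucc, qFactorial_succ, pow_add q, div_pow]
  field_simp
  ring

lemma moment_shift (hq : 1 < q) (m : ℕ) {b : ℝ} (hb : 0 ≤ b) :
    ∑' k, (qNat q k) ^ (m+1) * G q k b
      = b * ∑' k, (1 + q * qNat q k) ^ m * G q k (b / q) := by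
  have hs := summable_qNat_pow_G hq (m+1) hb
  rw [Summable.tsum_eq_zero_add hs]
  have h0 : (qNat q 0) ^ (m+1) * G q 0 b = 0 := by
    simp [qNat]
  rw [h0, zero_add]
  have hpt : ∀ k : ℕ, (qNat q (k+1)) ^ (m+1) * G q (k+1) b
      = b * ((1 + q * qNat q k) ^ m * G q k (b / q)) := by
    intro k
    rw [pow_succ, mul_assoc, G_succ hq k b, ← qNat_succ hq k]
    ring
  rw [tsum_congr hpt, tsum_mul_left]

lemma mom1 (hq : 1 < q) {b : ℝ} (hb : 0 ≤ b) : ∑' k, qNat q k * G q k b = b := by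
  have h := moment_shift hq 0 hb
  simp only [zero_add, pow_one, pow_zero, one_mul] at h
  rw [h, tsum_G hq (by positivity : (0:ℝ) ≤ b / q), mul_one]

lemma mom2 (hq : 1 < q) {b : ℝ} (hb : 0 ≤ b) :
    ∑' k, (qNat q k) ^ 2 * G q k b = b ^ 2 + b := by
  have hqn := qne hq
  have hbq : (0:ℝ) ≤ b / q := by positivity
  have h := moment_shift hq 1 hb
  norm_num at h
  have hsplit : ∑' k, (1 + q * qNat q k) * G q k (b/q)
      = (∑' k, G q k (b/q)) + q * ∑' k, qNat q k * G q k (b/q) := by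
    rw [← tsum_mul_left (a := q), ← Summable.tsum_add (summable_G hq hbq)
      ((summable_qNat_pow_G hq 1 hbq).congr (fun k => by rw [pow_one]) |>.mul_left q)]
    exact tsum_congr (fun k => by ring)
  rw [h, hsplit, tsum_G hq hbq, mom1 hq hbq]
  field_simp
  ring

lemma mom3 (hq : 1 < q) {b : ℝ} (hb : 0 ≤ b) :
    ∑' k, (qNat q k) ^ 3 * G q k b = b ^ 3 + (2 + q) * b ^ 2 + b := by
  have hqn := qne hq
  have hbq : (0:ℝ) ≤ b / q := by positivity
  have h := moment_shift hq 2 hb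
  norm_num at h
  have hsplit : ∑' k, (1 + q * qNat q k) ^ 2 * G q k (b/q)
      = (∑' k, G q k (b/q)) + (2*q) * (∑' k, qNat q k * G q k (b/q))
        + q^2 * ∑' k, (qNat q k)^2 * G q k (b/q) := by
    have s0 := summable_G hq hbq
    have s1 := (summable_qNat_pow_G hq 1 hbq).congr (fun k => by rw [pow_one])
    have s2 := summable_qNat_pow_G hq 2 hbq
    rw [← tsum_mul_left (a := 2*q), ← tsum_mul_left (a := q^2),
      ← Summable.tsum_add s0 (s1.mul_left (2*q)),
      ← Summable.tsum_add (s0.add (s1.mul_left (2*q))) (s2.mul_left (q^2))]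
    exact tsum_congr (fun k => by ring)
  rw [h, hsplit, tsum_G hq hbq, mom1 hq hbq, mom2 hq hbq]
  field_simp
  ring

lemma mom4 (hq : 1 < q) {b : ℝ} (hb : 0 ≤ b) :
    ∑' k, (qNat q k) ^ 4 * G q k b
      = b ^ 4 + (3 + 2*q + q^2) * b ^ 3 + (3 + 3*q + q^2) * b ^ 2 + b := by
  have hqn := qne hq
  have hbq : (0:ℝ) ≤ b / q := by positivity
  have h := moment_shift hq 3 hb
  norm_num at h
  have hsplit : ∑' k, (1 + q * qNat q k) ^ 3 * G q k (b/q)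
      = (∑' k, G q k (b/q)) + (3*q) * (∑' k, qNat q k * G q k (b/q))
        + (3*q^2) * (∑' k, (qNat q k)^2 * G q k (b/q))
        + q^3 * ∑' k, (qNat q k)^3 * G q k (b/q) := by
    have s0 := summable_G hq hbq
    have s1 := (summable_qNat_pow_G hq 1 hbq).congr (fun k => by rw [pow_one])
    have s2 := summable_qNat_pow_G hq 2 hbq
    have s3 := summable_qNat_pow_G hq 3 hbq
    rw [← tsum_mul_left (a := 3*q), ← tsum_mul_left (a := 3*q^2), ← tsum_mul_left (a := q^3),
      ← Summable.tsum_add s0 (s1.mul_left (3*q)),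
      ← Summable.tsum_add (s0.add (s1.mul_left (3*q))) (s2.mul_left (3*q^2)),
      ← Summable.tsum_add ((s0.add (s1.mul_left (3*q))).add (s2.mul_left (3*q^2))) (s3.mul_left (q^3))]
    exact tsum_congr (fun k => by ring)
  rw [h, hsplit, tsum_G hq hbq, mom1 hq hbq, mom2 hq hbq, mom3 hq hbq]
  field_simp
  ring
lemma basis_eq_G (hq : 1 < q) (n k : ℕ) (x : ℝ) :
    qSzaszBasis q n k x = G q k (qNat q n * x) := by
  rw [qSzaszBasis, G]
  rw [show -(qNat q n) * (q:ℝ) ^ (-(k:ℤ)) * x = -(qNat q n * x) * (q:ℝ) ^ (-(k:ℤ)) from by ring]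
  rw [mul_pow]

lemma qSzasz_pow (hq : 1 < q) (n m : ℕ) (x : ℝ) :
    qSzasz q n (fun t => t ^ m) x
      = (∑' k, (qNat q k) ^ m * G q k (qNat q n * x)) * ((qNat q n) ^ m)⁻¹ := by
  rw [qSzasz]
  have hpt : ∀ k, (fun t => t ^ m) (qNat q k / qNat q n) * qSzaszBasis q n k x
      = ((qNat q k) ^ m * G q k (qNat q n * x)) * ((qNat q n) ^ m)⁻¹ := by
    intro k
    rw [basis_eq_G hq n k x]
    simp only [div_pow]
    ring
  rw [tsum_congr hpt, tsum_mul_right]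

end QAux

/-- explicit formulas for the third and fourth moments. -/
theorem qSzasz_moments_three_four (q : ℝ) (hq : 1 < q) (n : ℕ) (hn : 1 ≤ n)
    (x : ℝ) (hx : 0 ≤ x) :
    qSzasz q n (fun t => t ^ 3) x =
      x ^ 3 + (2 + q) * x ^ 2 / qNat q n + x / qNat q n ^ 2 ∧
    qSzasz q n (fun t => t ^ 4) x =
      x ^ 4 + (3 + 2 * q + q ^ 2) * x ^ 3 / qNat q n +
        (3 + 3 * q + q ^ 2) * x ^ 2 / qNat q n ^ 2 + x / qNat q n ^ 3 := by
  have hc : qNat q n ≠ 0 := QAux.qNat_ne hq hn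
  have hb : 0 ≤ qNat q n * x := mul_nonneg (QAux.qNat_nonneg hq n) hx
  constructor
  · rw [QAux.qSzasz_pow hq n 3 x, QAux.mom3 hq hb]
    field_simp
  · rw [QAux.qSzasz_pow hq n 4 x, QAux.mom4 hq hb]
    field_simp
end
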